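/- arXiv:1812.11655 — 2 statements merged into one kernel-verified Lean document; each statement's English description precedes it below -/
import Mathlib

section
/- Let n ≥ 1, T > 0, let u : [0,T] × ℝⁿ → ℝ be continuous, and let (t,x) ∈ (0,T) × ℝⁿ. Then (p,q,X) ∈ 𝒫^{2,+}u(t,x) if and only if there exists a function φ : [0,T] × ℝⁿ → ℝ which is continuously differentiable in the time variable and twice continuously differentiable in the space variable, such that u − φ attains a strict global maximum over [0,T] × ℝⁿ at (t,x) and (φ(t,x), ∂_t φ(t,x), ∇_x φ(t,x), ∇²_x φ(t,x)) = (u(t,x), p, q, X). -/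
noncomputable section

open scoped BigOperators

/-- The quadratic form `⟨X v, v⟩` of a matrix `X` on Euclidean space. -/
def matQuadForm {n : ℕ} (X : Matrix (Fin n) (Fin n) ℝ)
    (v : EuclideanSpace ℝ (Fin n)) : ℝ :=
  ∑ i, (∑ j, X i j * v j) * v i

/-- `(p, q, X)` belongs to the parabolic superjet `𝒫^{2,+} u (t,x)` of
`u : [0,T] × ℝⁿ → ℝ` at `(t,x)`: `X` is symmetric and
`u(s,y) ≤ u(t,x) + p (s−t) + ⟨q, y−x⟩ + ½⟨X(y−x), y−x⟩ + o(|s−t| + ‖y−x‖²)`. -/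
def InParabolicSuperjet {n : ℕ} (T : ℝ) (u : ℝ → EuclideanSpace ℝ (Fin n) → ℝ)
    (t : ℝ) (x : EuclideanSpace ℝ (Fin n))
    (p : ℝ) (q : EuclideanSpace ℝ (Fin n)) (X : Matrix (Fin n) (Fin n) ℝ) : Prop :=
  X.IsSymm ∧
    ∀ ε > (0 : ℝ), ∃ δ > (0 : ℝ), ∀ s ∈ Set.Icc (0 : ℝ) T,
      ∀ y : EuclideanSpace ℝ (Fin n), |s - t| + ‖y - x‖ < δ →
        u s y - u t x - p * (s - t) - (∑ i, q i * (y i - x i))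
            - (1 / 2) * matQuadForm X (y - x)
          ≤ ε * (|s - t| + ‖y - x‖ ^ 2)

open intervalIntegral MeasureTheory Set

set_option linter.unusedSectionVars false


namespace SJet

/-- A "nice" modulus-like function. -/
structure Nice (h : ℝ → ℝ) : Prop where
  mono : Monotone h
  zero : ∀ r ≤ (0:ℝ), h r = 0
  small : ∀ ε > (0:ℝ), ∃ ρ > (0:ℝ), ∀ r ∈ Set.Ioc (0:ℝ) ρ, h r ≤ ε

namespace Nice

variable {h : ℝ → ℝ} (hh : Nice h)
include hh

lemma nonneg (r : ℝ) : 0 ≤ h r := by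
  rcases le_or_gt r 0 with hu | hu
  · exact (hh.zero r hu).ge
  · rw [← hh.zero 0 le_rfl]; exact hh.mono hu.le

lemma intble (a b : ℝ) : IntervalIntegrable h volume a b :=
  hh.mono.intervalIntegrable

end Nice

/-- Averaging operator: `A h r = ∫_1^2 h (r u) du`. -/
def A (h : ℝ → ℝ) (r : ℝ) : ℝ := ∫ u in (1:ℝ)..2, h (r * u)

namespace Nice
variable {h : ℝ → ℝ} (hh : Nice h)
include hh

lemma intble_comp (r a b : ℝ) : IntervalIntegrable (fun u => h (r * u)) volume a b := by
  rcases le_or_gt 0 r with hr | hr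
  · have : MonotoneOn (fun u => h (r * u)) (Set.uIcc a b) := by
      intro u _ v _ huv
      exact hh.mono (by nlinarith)
    exact this.intervalIntegrable
  · have : AntitoneOn (fun u => h (r * u)) (Set.uIcc a b) := by
      intro u _ v _ huv
      exact hh.mono (by nlinarith)
    exact this.intervalIntegrable

lemma A_zero {r : ℝ} (hr : r ≤ 0) : A h r = 0 := by
  rw [A]
  rw [intervalIntegral.integral_congr (g := fun _ => (0:ℝ))]
  · simp
  · intro u hu
    rw [Set.uIcc_of_le (by norm_num)] at hu
    exact hh.zero _ (by nlinarith [hu.1])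

lemma A_nonneg (r : ℝ) : 0 ≤ A h r :=
  intervalIntegral.integral_nonneg (by norm_num) fun u _ => hh.nonneg _

lemma A_mono : Monotone (A h) := by
  intro r r' hrr
  refine intervalIntegral.integral_mono_on (by norm_num) (hh.intble_comp r 1 2)
    (hh.intble_comp r' 1 2) fun u hu => hh.mono (by nlinarith [hu.1])

lemma le_A (r : ℝ) : h r ≤ A h r := by
  rcases le_or_gt r 0 with hr | hr
  · rw [hh.zero r hr, hh.A_zero hr]
  · have h1 : h r = ∫ _ in (1:ℝ)..2, h r := by
      rw [intervalIntegral.integral_const]; norm_num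
    rw [h1]
    refine intervalIntegral.integral_mono_on (by norm_num)
      (intervalIntegrable_const) (hh.intble_comp r 1 2) fun u hu => hh.mono ?_
    nlinarith [hu.1]

lemma A_le (r : ℝ) : A h r ≤ h (2 * r) := by
  rcases le_or_gt r 0 with hr | hr
  · rw [hh.A_zero hr, hh.zero _ (by linarith)]
  · have h1 : h (2*r) = ∫ _ in (1:ℝ)..2, h (2*r) := by
      rw [intervalIntegral.integral_const]; norm_num
    rw [h1, A]
    refine intervalIntegral.integral_mono_on (by norm_num)
      (hh.intble_comp r 1 2) (intervalIntegrable_const) fun u hu => hh.mono ?_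
    nlinarith [hu.2]

lemma nice_A : Nice (A h) where
  mono := hh.A_mono
  zero := fun _ hr => hh.A_zero hr
  small := by
    intro ε hε
    obtain ⟨ρ, hρ, hsm⟩ := hh.small ε hε
    refine ⟨ρ/2, by linarith, fun r hr => ?_⟩
    calc A h r ≤ h (2*r) := hh.A_le r
    _ ≤ ε := hsm _ ⟨by linarith [hr.1], by linarith [hr.2]⟩

/-- `A h r` equals `(H (2r) - H r)/r` for `r ≠ 0`, where `H` is the primitive of `h`. -/
lemma A_eq {r : ℝ} (hr : r ≠ 0) :
    A h r = ((∫ x in (0:ℝ)..(2*r), h x) - ∫ x in (0:ℝ)..r, h x) / r := by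
  have h1 : r • A h r = ∫ x in (r*1)..(r*2), h x :=
    intervalIntegral.smul_integral_comp_mul_left h r
  have h2 : (∫ x in (0:ℝ)..(2*r), h x) - (∫ x in (0:ℝ)..r, h x) = ∫ x in r..(2*r), h x :=
    intervalIntegral.integral_interval_sub_left (hh.intble 0 (2*r)) (hh.intble 0 r)
  rw [h2]
  rw [smul_eq_mul] at h1
  field_simp
  rw [mul_comm, h1]
  ring_nf

lemma A_cont : Continuous (A h) := by
  have Hcont : Continuous (fun c : ℝ => ∫ x in (0:ℝ)..c, h x) :=
    intervalIntegral.continuous_primitive (fun a b => hh.intble a b) 0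
  rw [continuous_iff_continuousAt]
  intro r₀
  rcases lt_trichotomy r₀ 0 with hr | hr | hr
  · have heq : A h =ᶠ[nhds r₀] (fun _ => (0:ℝ)) := by
      filter_upwards [eventually_lt_nhds hr] with r hr'
      exact hh.A_zero hr'.le
    exact (continuousAt_const (y := (0:ℝ))).congr heq.symm
  · -- continuity at 0
    subst hr
    rw [ContinuousAt, hh.A_zero le_rfl, Metric.tendsto_nhds]
    intro ε hε
    obtain ⟨ρ, hρ, hsm⟩ := hh.small (ε/2) (by linarith)
    filter_upwards [Metric.ball_mem_nhds (0:ℝ) (by positivity : (0:ℝ) < ρ/2)] with r hr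
    rw [Real.dist_eq, sub_zero]
    rw [Metric.mem_ball, Real.dist_eq, sub_zero] at hr
    rcases le_or_gt r 0 with h' | h'
    · rw [hh.A_zero h', abs_zero]; linarith
    · rw [abs_of_nonneg (hh.A_nonneg r)]
      have : A h r ≤ ε/2 := le_trans (hh.A_le r)
        (hsm _ ⟨by linarith, by rw [abs_of_pos h'] at hr; linarith⟩)
      linarith
  · have heq : A h =ᶠ[nhds r₀] (fun r => ((∫ x in (0:ℝ)..(2*r), h x)
        - ∫ x in (0:ℝ)..r, h x) / r) := by
      filter_upwards [eventually_gt_nhds hr] with r hr'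
      exact hh.A_eq hr'.ne'
    refine ContinuousAt.congr ?_ heq.symm
    exact ContinuousAt.div (((Hcont.comp (continuous_const.mul continuous_id)).sub
      Hcont).continuousAt) continuousAt_id hr.ne'

/-- Derivative of the average of a continuous nice function, for `r > 0`. -/
lemma A_hasDerivAt (hc : Continuous h) {r : ℝ} (hr : 0 < r) :
    HasDerivAt (A h) (((2 * h (2*r) - h r) - A h r) / r) r := by
  set H : ℝ → ℝ := fun c => ∫ x in (0:ℝ)..c, h x with hH
  have hHd : ∀ c : ℝ, HasDerivAt H (h c) c := fun c =>
    intervalIntegral.integral_hasDerivAt_right (hh.intble 0 c)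
      (hc.stronglyMeasurable.stronglyMeasurableAtFilter) hc.continuousAt
  have h2 : HasDerivAt (fun s => H (2*s)) (2 * h (2*r)) r := by
    have := (hHd (2*r)).comp r ((hasDerivAt_id r).const_mul 2)
    simpa [Function.comp_def, mul_comm] using this
  have hq : HasDerivAt (fun s => (H (2*s) - H s) / s)
      (((2 * h (2*r) - h r) * r - (H (2*r) - H r) * 1) / (r^2)) r :=
    (h2.sub (hHd r)).div (hasDerivAt_id r) hr.ne'
  have heq : A h =ᶠ[nhds r] (fun s => (H (2*s) - H s) / s) := by
    filter_upwards [eventually_gt_nhds hr] with s hs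
    exact hh.A_eq hs.ne'
  have := hq.congr_of_eventuallyEq heq
  refine this.congr_deriv (Eq.symm ?_)
  rw [hh.A_eq hr.ne']
  field_simp
  ring_nf
  rfl

end Nice

end SJet

namespace SJet

variable (g : ℝ → ℝ)

/-- odd C⁰ integrand for the time test function -/
def k1 (ρ : ℝ) : ℝ := 4 * (A g (4*ρ) - A g (-(4*ρ)))

/-- C¹ integrand for the space test function -/
def k2 (b : ℝ) : ℝ := 4 * A (A g) (4*b)

/-- time part of the test function -/
def F1 (a : ℝ) : ℝ := ∫ ρ in (0:ℝ)..a, k1 g ρ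

/-- space part of the test function (as a function of `b = ‖y-x‖²`) -/
def F2 (b : ℝ) : ℝ := ∫ ρ in (0:ℝ)..b, k2 g ρ

/-- derivative of `k2` -/
def k2d (b : ℝ) : ℝ := 16 * (((2 * A g (2*(4*b)) - A g (4*b)) - A (A g) (4*b)) / (4*b))

variable {g} (hg : Nice g)
include hg

lemma k1_cont : Continuous (k1 g) := by
  unfold k1
  have := hg.A_cont
  fun_prop

lemma k2_cont : Continuous (k2 g) := by
  unfold k2
  have := (hg.nice_A).A_cont
  fun_prop

lemma k1_zero : k1 g 0 = 0 := by
  simp [k1, hg.A_zero le_rfl]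

lemma k2_zero : k2 g 0 = 0 := by
  simp [k2, (hg.nice_A).A_zero le_rfl]

lemma k2_nonneg (b : ℝ) : 0 ≤ k2 g b := by
  have := (hg.nice_A).A_nonneg (4*b)
  unfold k2; linarith

lemma F1_zero : F1 g 0 = 0 := intervalIntegral.integral_same

lemma F2_zero : F2 g 0 = 0 := intervalIntegral.integral_same

lemma hasDerivAt_F1 (a : ℝ) : HasDerivAt (F1 g) (k1 g a) a :=
  intervalIntegral.integral_hasDerivAt_right (((k1_cont hg)).intervalIntegrable 0 a)
    (((k1_cont hg)).stronglyMeasurable.stronglyMeasurableAtFilter) ((k1_cont hg)).continuousAt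

lemma hasDerivAt_F2 (b : ℝ) : HasDerivAt (F2 g) (k2 g b) b :=
  intervalIntegral.integral_hasDerivAt_right (((k2_cont hg)).intervalIntegrable 0 b)
    (((k2_cont hg)).stronglyMeasurable.stronglyMeasurableAtFilter) ((k2_cont hg)).continuousAt

lemma hasDerivAt_k2 {b : ℝ} (hb : 0 < b) : HasDerivAt (k2 g) (k2d g b) b := by
  have h1 := (hg.nice_A).A_hasDerivAt hg.A_cont (r := 4*b) (by linarith)
  have h2 : HasDerivAt (fun c => 4 * A (A g) (4*c))
      (4 * ((((2 * A g (2*(4*b)) - A g (4*b)) - A (A g) (4*b)) / (4*b)) * 4)) b := by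
    have := (h1.comp b ((hasDerivAt_id b).const_mul 4)).const_mul 4
    simpa [Function.comp_def] using this
  have h3 : k2d g b
      = 4 * ((((2 * A g (2*(4*b)) - A g (4*b)) - A (A g) (4*b)) / (4*b)) * 4) := by
    rw [k2d]; ring
  rw [show k2 g = fun c => 4 * A (A g) (4*c) from rfl, h3]
  exact h2

lemma k2d_contAt {b : ℝ} (hb : 0 < b) : ContinuousAt (k2d g) b := by
  have hA := hg.A_cont
  have hAA := (hg.nice_A).A_cont
  unfold k2d
  have h4b : (4:ℝ)*b ≠ 0 := by positivity
  fun_prop (disch := assumption)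

lemma k2d_bound {b : ℝ} (hb : 0 ≤ b) :
    |k2d g b| * b ≤ 4 * |2 * A g (8*b) - A g (4*b) - A (A g) (4*b)| := by
  rcases eq_or_lt_of_le hb with h0 | h0
  · subst h0
    simp [k2d, hg.A_zero le_rfl, (hg.nice_A).A_zero le_rfl]
  · have key : k2d g b * b = 4 * (2 * A g (8*b) - A g (4*b) - A (A g) (4*b)) := by
      rw [k2d]
      have h8 : (2:ℝ)*(4*b) = 8*b := by ring
      rw [h8]
      field_simp
      ring
    calc |k2d g b| * b = |k2d g b * b| := by
          rw [abs_mul, abs_of_pos h0]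
    _ = |4 * (2 * A g (8*b) - A g (4*b) - A (A g) (4*b))| := by rw [key]
    _ = 4 * |2 * A g (8*b) - A g (4*b) - A (A g) (4*b)| := by
          rw [abs_mul]; norm_num
    _ ≤ 4 * |2 * A g (8*b) - A g (4*b) - A (A g) (4*b)| := le_rfl

lemma F1_even (a : ℝ) : F1 g (-a) = F1 g a := by
  have hodd : ∀ x : ℝ, k1 g (-x) = - k1 g x := by
    intro x; simp only [k1]; ring_nf
  have h1 : (∫ x in (0:ℝ)..a, k1 g (-x)) = ∫ x in (-a)..(-(0:ℝ)), k1 g x :=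
    intervalIntegral.integral_comp_neg (k1 g)
  have h2 : (∫ x in (0:ℝ)..a, k1 g (-x)) = - F1 g a := by
    rw [intervalIntegral.integral_congr (g := fun x => - k1 g x) (fun x _ => hodd x)]
    rw [intervalIntegral.integral_neg]; rfl
  rw [neg_zero] at h1
  have h3 : (∫ x in (-a)..(0:ℝ), k1 g x) = - F1 g (-a) := by
    rw [intervalIntegral.integral_symm 0 (-a)]; rfl
  rw [h2, h3] at h1
  linarith

lemma F1_ge_nonneg {a : ℝ} (ha : 0 ≤ a) : 2 * a * g (2*a) ≤ F1 g a := by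
  have hAg := hg.nice_A
  have e1 : F1 g a = ∫ ρ in (0:ℝ)..a, 4 * A g (4*ρ) := by
    refine intervalIntegral.integral_congr fun ρ hρ => ?_
    rw [Set.uIcc_of_le ha] at hρ
    have : A g (-(4*ρ)) = 0 := hg.A_zero (by nlinarith [hρ.1])
    simp [k1, this]
  have hint : ∀ c d : ℝ, IntervalIntegrable (fun ρ => 4 * A g (4*ρ)) volume c d := by
    intro c d
    exact (continuous_const.mul (hg.A_cont.comp (continuous_const.mul continuous_id))).intervalIntegrable c d
  have e2 : (∫ ρ in (0:ℝ)..(a/2), 4 * A g (4*ρ)) + (∫ ρ in (a/2)..a, 4 * A g (4*ρ))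
      = ∫ ρ in (0:ℝ)..a, 4 * A g (4*ρ) :=
    intervalIntegral.integral_add_adjacent_intervals (hint 0 (a/2)) (hint (a/2) a)
  have e3 : (0:ℝ) ≤ ∫ ρ in (0:ℝ)..(a/2), 4 * A g (4*ρ) :=
    intervalIntegral.integral_nonneg (by linarith) fun u _ => by
      have := hg.A_nonneg (4*u); linarith
  have e4 : (∫ ρ in (a/2)..a, (4 * A g (2*a) : ℝ)) ≤ ∫ ρ in (a/2)..a, 4 * A g (4*ρ) := by
    refine intervalIntegral.integral_mono_on (by linarith) intervalIntegrable_const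
      (hint (a/2) a) fun u hu => ?_
    have : 2*a ≤ 4*u := by nlinarith [hu.1]
    have := hg.A_mono this
    linarith
  have e5 : (∫ ρ in (a/2)..a, (4 * A g (2*a) : ℝ)) = 2 * a * A g (2*a) := by
    rw [intervalIntegral.integral_const, smul_eq_mul]; ring
  have e6 : g (2*a) ≤ A g (2*a) := hg.le_A _
  rw [e1, ← e2]
  nlinarith [hg.A_nonneg (2*a)]

lemma F1_ge (a : ℝ) : 2 * |a| * g (2*|a|) ≤ F1 g a := by
  rcases le_or_gt 0 a with ha | ha
  · rw [abs_of_nonneg ha]; exact F1_ge_nonneg hg ha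
  · rw [abs_of_neg ha, ← F1_even hg a]
    exact F1_ge_nonneg hg (by linarith)

lemma F2_ge {b : ℝ} (hb : 0 ≤ b) : 2 * b * g (2*b) ≤ F2 g b := by
  have hAA := hg.nice_A.nice_A
  have hint : ∀ c d : ℝ, IntervalIntegrable (k2 g) volume c d := fun c d =>
    ((k2_cont hg)).intervalIntegrable c d
  have e2 : (∫ ρ in (0:ℝ)..(b/2), k2 g ρ) + (∫ ρ in (b/2)..b, k2 g ρ)
      = F2 g b :=
    intervalIntegral.integral_add_adjacent_intervals (hint 0 (b/2)) (hint (b/2) b)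
  have e3 : (0:ℝ) ≤ ∫ ρ in (0:ℝ)..(b/2), k2 g ρ :=
    intervalIntegral.integral_nonneg (by linarith) fun u _ => k2_nonneg hg u
  have e4 : (∫ ρ in (b/2)..b, (k2 g (b/2) : ℝ)) ≤ ∫ ρ in (b/2)..b, k2 g ρ := by
    refine intervalIntegral.integral_mono_on (by linarith) intervalIntegrable_const
      (hint (b/2) b) fun u hu => ?_
    have : (4:ℝ)*(b/2) ≤ 4*u := by nlinarith [hu.1]
    have := (hg.nice_A).A_mono this
    simp only [k2]; linarith
  have e5 : (∫ ρ in (b/2)..b, (k2 g (b/2) : ℝ)) = (b/2) * k2 g (b/2) := by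
    rw [intervalIntegral.integral_const, smul_eq_mul]; ring
  have e6 : g (2*b) ≤ A (A g) (4*(b/2)) := by
    have h1 : g (2*b) ≤ A g (2*b) := hg.le_A _
    have h2 : A g (2*b) ≤ A (A g) (2*b) := (hg.nice_A).le_A _
    have h3 : A (A g) (2*b) = A (A g) (4*(b/2)) := by ring_nf
    linarith [h3 ▸ h2]
  rw [← e2]
  have : 2 * b * g (2*b) ≤ (b/2) * k2 g (b/2) := by
    simp only [k2]
    nlinarith [(hg.nice_A).A_nonneg (4*(b/2)), hg.nonneg (2*b)]
  linarith

/-- The combination inequality. -/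
lemma comb {a b : ℝ} (ha : 0 ≤ a) (hb : 0 ≤ b) :
    (a + b) * g (a + b) ≤ 2*a*g (2*a) + 2*b*g (2*b) := by
  rcases le_total a b with hab | hab
  · have h1 : g (a+b) ≤ g (2*b) := hg.mono (by linarith)
    have h2 : (a+b) * g (a+b) ≤ (2*b) * g (2*b) := by
      nlinarith [hg.nonneg (a+b), hg.nonneg (2*b)]
    nlinarith [hg.nonneg (2*a)]
  · have h1 : g (a+b) ≤ g (2*a) := hg.mono (by linarith)
    have h2 : (a+b) * g (a+b) ≤ (2*a) * g (2*a) := by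
      nlinarith [hg.nonneg (a+b), hg.nonneg (2*a)]
    nlinarith [hg.nonneg (2*b)]

end SJet

namespace SJet

open InnerProductSpace

variable {n : ℕ}

local notation "E" => EuclideanSpace ℝ (Fin n)

/-- the matrix `X` as a continuous linear map on Euclidean space -/
def matCLM (X : Matrix (Fin n) (Fin n) ℝ) : E →L[ℝ] E :=
  LinearMap.toContinuousLinearMap (Matrix.toEuclideanLin X)

lemma matCLM_apply (X : Matrix (Fin n) (Fin n) ℝ) (v : E) (i : Fin n) :
    matCLM X v i = ∑ j, X i j * v j := by
  simp [matCLM, Matrix.toEuclideanLin_apply, Matrix.mulVec, dotProduct]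

lemma inner_eq_sum (q v : E) : ⟪q, v⟫_ℝ = ∑ i, q i * v i := by
  simp [PiLp.inner_apply, RCLike.inner_apply, conj_trivial]
  exact Finset.sum_congr rfl fun i _ => mul_comm _ _

lemma sub_apply' (y x : E) (i : Fin n) : (y - x) i = y i - x i := rfl

lemma matQuadForm_eq (X : Matrix (Fin n) (Fin n) ℝ) (v : E) :
    matQuadForm X v = ⟪matCLM X v, v⟫_ℝ := by
  rw [inner_eq_sum, matQuadForm]
  exact Finset.sum_congr rfl fun i _ => by rw [matCLM_apply]

lemma matCLM_symm {X : Matrix (Fin n) (Fin n) ℝ} (hX : X.IsSymm) (v w : E) :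
    ⟪matCLM X v, w⟫_ℝ = ⟪v, matCLM X w⟫_ℝ := by
  rw [inner_eq_sum, inner_eq_sum]
  have h1 : ∀ i, matCLM X v i * w i = ∑ j, X i j * v j * w i := by
    intro i; rw [matCLM_apply, Finset.sum_mul]
  have h2 : ∀ i, v i * matCLM X w i = ∑ j, X i j * w j * v i := by
    intro i; rw [matCLM_apply, mul_comm, Finset.sum_mul]
  rw [Finset.sum_congr rfl fun i _ => h1 i, Finset.sum_congr rfl fun i _ => h2 i]
  rw [Finset.sum_comm]
  refine Finset.sum_congr rfl fun i _ => Finset.sum_congr rfl fun j _ => ?_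
  rw [hX.apply i j]
  ring

lemma hasGradientAt_of_hasFDerivAt {f : E → ℝ} {D : E →L[ℝ] ℝ} {gr : E} {y : E}
    (hf : HasFDerivAt f D y) (h : ∀ v, D v = ⟪gr, v⟫_ℝ) : HasGradientAt f gr y := by
  rw [hasGradientAt_iff_hasFDerivAt]
  refine hf.congr_fderiv (Eq.symm ?_)
  exact ContinuousLinearMap.ext fun v => by rw [toDual_apply_apply, ← h v]

/-- derivative of the affine-linear part -/
lemma lin_hasFDerivAt (q x y : E) :
    HasFDerivAt (fun y : E => ⟪q, y - x⟫_ℝ) (innerSL ℝ q) y := by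
  have h1 : HasFDerivAt (fun y : E => y - x) (ContinuousLinearMap.id ℝ _) y :=
    (hasFDerivAt_id y).sub_const x
  have := ((innerSL ℝ q).hasFDerivAt (x := y - x)).comp y h1
  exact this

/-- derivative of the quadratic part -/
lemma quad_hasFDerivAt {X : Matrix (Fin n) (Fin n) ℝ} (hX : X.IsSymm) (x y : E) :
    HasFDerivAt (fun y : E => (1/2) * ⟪matCLM X (y - x), y - x⟫_ℝ)
      (innerSL ℝ (matCLM X (y - x))) y := by
  have h1 : HasFDerivAt (fun y : E => y - x) (ContinuousLinearMap.id ℝ _) y :=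
    (hasFDerivAt_id y).sub_const x
  have h2 : HasFDerivAt (fun y : E => matCLM X (y - x)) (matCLM X) y := by
    have := ((matCLM X).hasFDerivAt (x := y - x)).comp y h1
    simpa only [Function.comp_def, ContinuousLinearMap.comp_id] using this
  have h3 := (h2.inner ℝ h1).const_mul (1/2:ℝ)
  refine h3.congr_fderiv (Eq.symm ?_)
  refine ContinuousLinearMap.ext fun v => ?_
  simp only [ContinuousLinearMap.smul_apply, ContinuousLinearMap.coe_comp', Function.comp_apply,
    fderivInnerCLM_apply, ContinuousLinearMap.prod_apply, ContinuousLinearMap.coe_id', id_eq,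
    innerSL_apply_apply, smul_eq_mul]
  have hsy : ⟪matCLM X v, y - x⟫_ℝ = ⟪matCLM X (y - x), v⟫_ℝ := by
    rw [matCLM_symm hX, real_inner_comm]
  rw [hsy]; ring

/-- derivative of `y ↦ ‖y - x‖²` -/
lemma normsq_hasFDerivAt (x y : E) :
    HasFDerivAt (fun y : E => ‖y - x‖^2) ((2:ℝ) • innerSL ℝ (y - x)) y := by
  have h1 : HasFDerivAt (fun y : E => y - x) (ContinuousLinearMap.id ℝ _) y :=
    (hasFDerivAt_id y).sub_const x
  have h3 := h1.inner ℝ h1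
  have heq : (fun y : E => ⟪y - x, y - x⟫_ℝ) = fun y : E => ‖y - x‖^2 := by
    funext z; rw [real_inner_self_eq_norm_sq]
  rw [heq] at h3
  refine h3.congr_fderiv (Eq.symm ?_)
  refine ContinuousLinearMap.ext fun v => ?_
  simp only [ContinuousLinearMap.smul_apply, ContinuousLinearMap.coe_comp', Function.comp_apply,
    fderivInnerCLM_apply, ContinuousLinearMap.prod_apply, ContinuousLinearMap.coe_id', id_eq,
    innerSL_apply_apply, smul_eq_mul]
  rw [real_inner_comm v (y - x)]
  ring

/-- rank-one operator `v ↦ ⟪z, v⟫ z` -/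
def rankOne (z : E) : E →L[ℝ] E := (innerSL ℝ z).smulRight z

lemma rankOne_apply (z v : E) : rankOne z v = ⟪z, v⟫_ℝ • z := rfl

lemma rankOne_norm (z : E) : ‖rankOne (n := n) z‖ = ‖z‖^2 := by
  rw [rankOne, ContinuousLinearMap.norm_smulRight_apply, innerSL_apply_norm, sq]

lemma rankOne_continuous : Continuous (rankOne (n := n)) := by
  have : Continuous (fun p : (E →L[ℝ] ℝ) × E => p.1.smulRight p.2) :=
    (ContinuousLinearMap.smulRightL ℝ E E).continuous₂
  exact this.comp ((innerSL ℝ).continuous.prodMk continuous_id)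

end SJet

namespace SJet

open InnerProductSpace

variable {n : ℕ}

local notation "E" => EuclideanSpace ℝ (Fin n)

lemma rankOne_zero : rankOne (n := n) 0 = 0 := by
  ext v i
  simp [rankOne_apply]

lemma normsq_pos {x y : E} (hxy : y ≠ x) : 0 < ‖y - x‖^2 := by
  have h1 : y - x ≠ 0 := sub_ne_zero_of_ne hxy
  have h2 : 0 < ‖y - x‖ := norm_pos_iff.mpr h1
  positivity

variable {g : ℝ → ℝ} (hg : Nice g)
include hg

/-- the scalar coefficient `c(b) = 2 k₂(b) + 4b` as a function of `y` is continuous and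
vanishes at `x`. -/
lemma coeff_cont (x : E) :
    Continuous (fun y : E => 2 * k2 g (‖y - x‖^2) + 4*(‖y - x‖^2)) := by
  have h1 : Continuous (fun y : E => ‖y - x‖^2) := by fun_prop
  have := k2_cont hg
  fun_prop

lemma coeff_zero : 2 * k2 g (‖(0:E)‖^2) + 4*(‖(0:E)‖^2) = 0 := by
  simp [k2_zero hg]

/-- Fréchet derivative of `y ↦ c(‖y-x‖²) • (y - x)`. -/
lemma Ncomp_hasFDerivAt (x y : E) :
    HasFDerivAt (fun y : E => (2 * k2 g (‖y - x‖^2) + 4*(‖y - x‖^2)) • (y - x))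
      ((2 * k2 g (‖y - x‖^2) + 4*(‖y - x‖^2)) • ContinuousLinearMap.id ℝ _
        + (4 * k2d g (‖y - x‖^2) + 8) • rankOne (y - x)) y := by
  rcases eq_or_ne y x with rfl | hxy
  · -- at the center the derivative is 0
    have htarget : (2 * k2 g (‖y - y‖^2) + 4*(‖y - y‖^2)) • ContinuousLinearMap.id ℝ
          (EuclideanSpace ℝ (Fin n))
        + (4 * k2d g (‖y - y‖^2) + 8) • rankOne (y - y) = 0 := by
      rw [sub_self]
      have h0 : (2 * k2 g (‖(0:E)‖^2) + 4*(‖(0:E)‖^2)) = 0 := coeff_zero hg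
      rw [h0, rankOne_zero]
      refine ContinuousLinearMap.ext fun v => ?_
      simp
    rw [htarget, hasFDerivAt_iff_isLittleO_nhds_zero]
    have hfy : (2 * k2 g (‖y - y‖^2) + 4*(‖y - y‖^2)) • (y - y) = 0 := by
      rw [sub_self, smul_zero]
    rw [Asymptotics.isLittleO_iff]
    intro C hC
    have hcont : Continuous (fun h : E => 2 * k2 g (‖h‖^2) + 4*(‖h‖^2)) := by
      have := coeff_cont hg (0:E)
      simpa using this
    have htends : Filter.Tendsto (fun h : E => 2 * k2 g (‖h‖^2) + 4*(‖h‖^2))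
        (nhds 0) (nhds 0) := by
      have := hcont.tendsto 0
      simpa [k2_zero hg] using this
    filter_upwards [htends.eventually_lt_const hC] with h hlt
    have hsimp : (2 * k2 g (‖y + h - y‖^2) + 4*(‖y + h - y‖^2)) • (y + h - y)
        = (2 * k2 g (‖h‖^2) + 4*(‖h‖^2)) • h := by
      rw [add_sub_cancel_left]
    rw [hfy, hsimp, sub_zero, ContinuousLinearMap.zero_apply, sub_zero, norm_smul,
      Real.norm_eq_abs]
    have hnn : 0 ≤ 2 * k2 g (‖h‖^2) + 4*(‖h‖^2) := by
      have := k2_nonneg hg (‖h‖^2)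
      positivity
    rw [abs_of_nonneg hnn]
    exact mul_le_mul_of_nonneg_right hlt.le (norm_nonneg _)
  · have hb : 0 < ‖y - x‖^2 := normsq_pos hxy
    have h4 : HasDerivAt (fun r : ℝ => 4*r) 4 (‖y - x‖^2) := by
      simpa using (hasDerivAt_id (‖y - x‖^2)).const_mul 4
    have hk2' : HasDerivAt (fun r => 2 * k2 g r + 4*r) (2 * k2d g (‖y - x‖^2) + 4) (‖y - x‖^2) :=
      ((hasDerivAt_k2 hg hb).const_mul 2).add h4
    have hcb : HasFDerivAt (fun y : E => 2 * k2 g (‖y - x‖^2) + 4*(‖y - x‖^2))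
        ((2 * k2d g (‖y - x‖^2) + 4) • ((2:ℝ) • innerSL ℝ (y - x))) y := by
      have := hk2'.comp_hasFDerivAt y (normsq_hasFDerivAt x y)
      simpa [Function.comp_def] using this
    have hid : HasFDerivAt (fun y : E => y - x) (ContinuousLinearMap.id ℝ _) y :=
      (hasFDerivAt_id y).sub_const x
    have := hcb.smul hid
    refine this.congr_fderiv (Eq.symm ?_)
    refine ContinuousLinearMap.ext fun v => ?_
    simp only [ContinuousLinearMap.add_apply, ContinuousLinearMap.smul_apply,
      ContinuousLinearMap.smulRight_apply, ContinuousLinearMap.coe_id', id_eq,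
      rankOne_apply, innerSL_apply_apply, smul_eq_mul, smul_smul]
    congr 1
    ring

/-- Continuity of the Hessian correction term. -/
lemma hess_cont (x : E) :
    Continuous (fun y : E => (2 * k2 g (‖y - x‖^2) + 4*(‖y - x‖^2)) • ContinuousLinearMap.id ℝ
        (EuclideanSpace ℝ (Fin n))
      + (4 * k2d g (‖y - x‖^2) + 8) • rankOne (y - x)) := by
  have hbcont : Continuous (fun y : E => ‖y - x‖^2) := by fun_prop
  refine Continuous.add ((coeff_cont hg x).smul continuous_const) ?_
  rw [continuous_iff_continuousAt]
  intro y₀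
  rcases eq_or_ne y₀ x with rfl | hxy
  · -- squeeze at the center
    have hval : (4 * k2d g (‖y₀ - y₀‖^2) + 8) • rankOne (y₀ - y₀) = 0 := by
      rw [sub_self, rankOne_zero]
      refine ContinuousLinearMap.ext fun v => ?_
      simp
    rw [ContinuousAt, hval]
    have hbound : ∀ y : E, ‖(4 * k2d g (‖y - y₀‖^2) + 8) • rankOne (y - y₀)‖
        ≤ 4 * (4 * |2 * A g (8*(‖y - y₀‖^2)) - A g (4*(‖y - y₀‖^2)) - A (A g) (4*(‖y - y₀‖^2))|)
          + 8 * ‖y - y₀‖^2 := by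
      intro y
      set b := ‖y - y₀‖^2 with hbdef
      have hb0 : 0 ≤ b := sq_nonneg _
      have hns : ‖(4 * k2d g b + 8) • rankOne (y - y₀)‖
          ≤ |4 * k2d g b + 8| * ‖rankOne (y - y₀)‖ :=
        ContinuousLinearMap.opNorm_smul_le _ _
      refine le_trans hns ?_
      rw [rankOne_norm]
      calc |4 * k2d g b + 8| * ‖y - y₀‖^2 ≤ (4 * |k2d g b| + 8) * b := by
            refine mul_le_mul_of_nonneg_right ?_ hb0
            calc |4 * k2d g b + 8| ≤ |4 * k2d g b| + 8 := by
                  refine le_trans (abs_add_le _ _) (by norm_num)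
            _ = 4 * |k2d g b| + 8 := by rw [abs_mul]; norm_num
      _ = 4 * (|k2d g b| * b) + 8 * b := by ring
      _ ≤ 4 * (4 * |2 * A g (8*b) - A g (4*b) - A (A g) (4*b)|) + 8 * b := by
            have := k2d_bound hg hb0
            linarith
    refine squeeze_zero_norm hbound ?_
    have hA := hg.A_cont
    have hAA := (hg.nice_A).A_cont
    have hcont2 : Continuous (fun y : E =>
        4 * (4 * |2 * A g (8*(‖y - y₀‖^2)) - A g (4*(‖y - y₀‖^2)) - A (A g) (4*(‖y - y₀‖^2))|)
          + 8 * ‖y - y₀‖^2) := by fun_prop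
    have := hcont2.tendsto y₀
    simpa [hg.A_zero le_rfl, (hg.nice_A).A_zero le_rfl] using this
  · have hb : 0 < ‖y₀ - x‖^2 := normsq_pos hxy
    have h1 : ContinuousAt (fun y : E => 4 * k2d g (‖y - x‖^2) + 8) y₀ := by
      have hx2 : ContinuousAt (fun y : E => ‖y - x‖^2) y₀ := by fun_prop
      have hcc := Filter.Tendsto.comp (g := k2d g) (f := fun y : E => ‖y - x‖^2)
        (y := nhds (‖y₀ - x‖^2)) (k2d_contAt hg hb) hx2
      exact (continuousAt_const.mul hcc).add continuousAt_const
    exact ContinuousAt.smul h1 (rankOne_continuous.continuousAt.comp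
      ((continuous_id.sub continuous_const).continuousAt))

end SJet

namespace SJet

open InnerProductSpace

variable {n : ℕ}

local notation "E" => EuclideanSpace ℝ (Fin n)

set_option maxHeartbeats 2000000 in
theorem forward {T : ℝ}
    (u : ℝ → E → ℝ)
    (hu : ContinuousOn (fun pr : ℝ × E => u pr.1 pr.2) (Set.Icc 0 T ×ˢ Set.univ))
    {t : ℝ} {x : E}
    (p : ℝ) (q : E) (X : Matrix (Fin n) (Fin n) ℝ) (hX : X.IsSymm)
    (hsj : ∀ ε > (0 : ℝ), ∃ δ > (0 : ℝ), ∀ s ∈ Set.Icc (0 : ℝ) T,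
      ∀ y : E, |s - t| + ‖y - x‖ < δ →
        u s y - u t x - p * (s - t) - (∑ i, q i * (y i - x i))
            - (1 / 2) * matQuadForm X (y - x)
          ≤ ε * (|s - t| + ‖y - x‖ ^ 2)) :
    ∃ (φ : ℝ → E → ℝ) (φt : ℝ → E → ℝ) (φx : ℝ → E → E)
      (φxx : ℝ → E → (E →L[ℝ] E)),
      Continuous (fun pr : ℝ × E => φt pr.1 pr.2) ∧
      (∀ (s : ℝ) (y : E), HasDerivAt (fun r => φ r y) (φt s y) s) ∧
      Continuous (fun pr : ℝ × E => φx pr.1 pr.2) ∧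
      (∀ (s : ℝ) (y : E), HasGradientAt (φ s) (φx s y) y) ∧
      Continuous (fun pr : ℝ × E => φxx pr.1 pr.2) ∧
      (∀ (s : ℝ) (y : E), HasFDerivAt (φx s) (φxx s y) y) ∧
      (∀ s ∈ Set.Icc (0 : ℝ) T, ∀ y : E, (s, y) ≠ (t, x) →
        u s y - φ s y < u t x - φ t x) ∧
      φ t x = u t x ∧ φt t x = p ∧ φx t x = q ∧
      (∀ (v : E) (i : Fin n), φxx t x v i = ∑ j, X i j * v j) := by
  classical
  set w : ℝ → E → ℝ := fun s y => u s y - u t x - p * (s - t) - ⟪q, y - x⟫_ℝ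
      - (1/2) * ⟪matCLM X (y - x), y - x⟫_ℝ with hwdef
  have hweq : ∀ s y, u s y - u t x - p * (s - t) - (∑ i, q i * (y i - x i))
      - (1/2) * matQuadForm X (y - x) = w s y := by
    intro s y
    simp only [hwdef, matQuadForm_eq, inner_eq_sum, sub_apply']
  -- continuity of w on the strip
  have hwcont : ContinuousOn (fun pr : ℝ × E => w pr.1 pr.2)
      (Set.Icc (0:ℝ) T ×ˢ Set.univ) := by
    simp only [hwdef]
    have h1 : Continuous (fun pr : ℝ × E => ⟪q, pr.2 - x⟫_ℝ) :=
      continuous_const.inner (continuous_snd.sub continuous_const)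
    have h2 : Continuous (fun pr : ℝ × E =>
        (1/2) * ⟪matCLM X (pr.2 - x), pr.2 - x⟫_ℝ) :=
      continuous_const.mul (((matCLM X).continuous.comp
        (continuous_snd.sub continuous_const)).inner (continuous_snd.sub continuous_const))
    exact ((((hu.sub continuous_const.continuousOn).sub
      ((continuous_const.mul (continuous_fst.sub continuous_const)).continuousOn)).sub
      h1.continuousOn).sub h2.continuousOn)
  -- compact sublevel sets
  set S : ℝ → Set (ℝ × E) := fun r =>
    {pr | pr.1 ∈ Set.Icc (0:ℝ) T ∧ |pr.1 - t| + ‖pr.2 - x‖^2 ≤ r} with hSdef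
  have hSsub : ∀ r, S r ⊆ Set.Icc (0:ℝ) T ×ˢ Set.univ := fun r pr hpr =>
    ⟨hpr.1, trivial⟩
  have hScomp : ∀ r, IsCompact (S r) := by
    intro r
    have hclosed : IsClosed (S r) := by
      have h1 : IsClosed {pr : ℝ × E | pr.1 ∈ Set.Icc (0:ℝ) T} :=
        isClosed_Icc.preimage continuous_fst
      have h2 : IsClosed {pr : ℝ × E | |pr.1 - t| + ‖pr.2 - x‖^2 ≤ r} := by
        refine isClosed_le ?_ continuous_const
        fun_prop
      exact h1.inter h2
    have hsub2 : S r ⊆ Set.Icc (0:ℝ) T ×ˢ Metric.closedBall x (Real.sqrt r) := by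
      intro pr hpr
      refine ⟨hpr.1, ?_⟩
      rw [Metric.mem_closedBall, dist_eq_norm]
      have h3 : ‖pr.2 - x‖^2 ≤ r := le_trans (le_add_of_nonneg_left (abs_nonneg _)) hpr.2
      have h4 := Real.sqrt_le_sqrt h3
      rwa [Real.sqrt_sq (norm_nonneg _)] at h4
    exact (isCompact_Icc.prod (isCompact_closedBall x _)).of_isClosed_subset hclosed hsub2
  set m : ℝ → ℝ := fun r => sSup (insert 0 ((fun pr : ℝ × E => w pr.1 pr.2) '' S r))
    with hmdef
  have hbdd : ∀ r, BddAbove (insert 0 ((fun pr : ℝ × E => w pr.1 pr.2) '' S r)) := by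
    intro r
    exact (((hScomp r).image_of_continuousOn (hwcont.mono (hSsub r))).bddAbove).insert 0
  have hm0 : ∀ r, 0 ≤ m r := fun r => le_csSup (hbdd r) (Set.mem_insert _ _)
  have hwm : ∀ r, ∀ pr ∈ S r, w pr.1 pr.2 ≤ m r := fun r pr hpr =>
    le_csSup (hbdd r) (Set.mem_insert_of_mem _ (Set.mem_image_of_mem _ hpr))
  have hmmono : Monotone m := by
    intro r r' hrr
    refine csSup_le_csSup (hbdd r') (Set.insert_nonempty _ _) ?_
    refine Set.insert_subset_insert (Set.image_mono fun pr hpr => ⟨hpr.1, le_trans hpr.2 hrr⟩)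
  have hmsmall : ∀ ε > (0:ℝ), ∃ ρ > (0:ℝ), ∀ ρ' ∈ Set.Ioc (0:ℝ) ρ, m ρ' ≤ ε * ρ' := by
    intro ε hε
    obtain ⟨δ, hδ, hsup⟩ := hsj ε hε
    refine ⟨min (δ/3) ((δ/3)^2), lt_min (div_pos hδ (by norm_num)) (pow_pos (div_pos hδ (by norm_num)) 2), fun ρ' hρ' => ?_⟩
    refine csSup_le (Set.insert_nonempty _ _) ?_
    rintro z (rfl | ⟨pr, hpr, rfl⟩)
    · exact mul_nonneg hε.le hρ'.1.le
    · obtain ⟨hprIcc, hprle⟩ := hpr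
      have h1 : |pr.1 - t| ≤ ρ' := le_trans (le_add_of_nonneg_right (sq_nonneg _)) hprle
      have h2 : ‖pr.2 - x‖^2 ≤ ρ' := le_trans (le_add_of_nonneg_left (abs_nonneg _)) hprle
      have hρδ1 : ρ' ≤ δ/3 := le_trans hρ'.2 (min_le_left _ _)
      have hρδ2 : ρ' ≤ (δ/3)^2 := le_trans hρ'.2 (min_le_right _ _)
      have h3 : ‖pr.2 - x‖ ≤ δ/3 := by nlinarith [norm_nonneg (pr.2 - x)]
      have h4 : |pr.1 - t| + ‖pr.2 - x‖ < δ := by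
        have : |pr.1 - t| ≤ δ/3 := le_trans h1 hρδ1
        linarith
      have h5 := hsup pr.1 hprIcc pr.2 h4
      rw [hweq] at h5
      calc w pr.1 pr.2 ≤ ε * (|pr.1 - t| + ‖pr.2 - x‖^2) := h5
      _ ≤ ε * ρ' := mul_le_mul_of_nonneg_left hprle hε.le
  set G : ℝ → ℝ := fun r => sSup (insert 0 ((fun ρ => m ρ / ρ) '' Set.Ioc 0 r)) with hGdef
  have hGbdd : ∀ r, BddAbove (insert 0 ((fun ρ => m ρ / ρ) '' Set.Ioc 0 r)) := by
    intro r
    obtain ⟨ρ₁, hρ₁, hsm⟩ := hmsmall 1 one_pos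
    refine ⟨max 1 (m r / min ρ₁ r), ?_⟩
    rintro z (rfl | ⟨ρ, hρ, rfl⟩)
    · exact le_trans zero_le_one (le_max_left _ _)
    · rcases le_or_gt ρ ρ₁ with hcase | hcase
      · have hle := hsm ρ ⟨hρ.1, hcase⟩
        have : m ρ / ρ ≤ 1 := by rw [div_le_one hρ.1]; linarith
        exact le_trans this (le_max_left _ _)
      · have hmin : 0 < min ρ₁ r := lt_min hρ₁ (lt_trans hρ₁ (lt_of_lt_of_le hcase hρ.2))
        have hle : min ρ₁ r ≤ ρ := le_trans (min_le_left _ _) hcase.le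
        have : m ρ / ρ ≤ m r / min ρ₁ r :=
          div_le_div₀ (hm0 r) (hmmono hρ.2) hmin hle
        exact le_trans this (le_max_right _ _)
  have hG0 : ∀ r ≤ (0:ℝ), G r = 0 := by
    intro r hr
    have hempty : Set.Ioc (0:ℝ) r = ∅ := Set.Ioc_eq_empty (by linarith)
    have h01 : insert (0:ℝ) (∅ : Set ℝ) = {0} := by simp
    simp only [hGdef, hempty, Set.image_empty, h01]
    exact csSup_singleton 0
  have hGNice : Nice G := by
    refine ⟨?_, hG0, ?_⟩
    · intro r r' hrr
      refine csSup_le_csSup (hGbdd r') (Set.insert_nonempty _ _) ?_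
      exact Set.insert_subset_insert (Set.image_mono (Set.Ioc_subset_Ioc_right hrr))
    · intro ε hε
      obtain ⟨ρ₁, hρ₁, hsm⟩ := hmsmall ε hε
      refine ⟨ρ₁, hρ₁, fun r hr => ?_⟩
      refine csSup_le (Set.insert_nonempty _ _) ?_
      rintro z (rfl | ⟨ρ, hρ, rfl⟩)
      · exact hε.le
      · have := hsm ρ ⟨hρ.1, le_trans hρ.2 hr.2⟩
        rw [div_le_iff₀ hρ.1]
        linarith [this]
  have hmG : ∀ ρ > (0:ℝ), m ρ ≤ ρ * G ρ := by
    intro ρ hρ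
    have h1 : m ρ / ρ ≤ G ρ :=
      le_csSup (hGbdd ρ) (Set.mem_insert_of_mem _ ⟨ρ, ⟨hρ, le_rfl⟩, rfl⟩)
    rw [div_le_iff₀ hρ] at h1
    linarith [h1]
  -- global domination
  have hdom : ∀ s ∈ Set.Icc (0:ℝ) T, ∀ y : E,
      w s y ≤ F1 G (s - t) + F2 G (‖y - x‖^2) := by
    intro s hs y
    rcases eq_or_ne (s, y) (t, x) with heq | hne
    · obtain ⟨hst, hyx⟩ : s = t ∧ y = x := by simpa [Prod.ext_iff] using heq
      subst hst; subst hyx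
      have hw0 : w s y = 0 := by simp [hwdef]
      rw [hw0, sub_self, sub_self, norm_zero]
      have h0 : (0:ℝ)^2 = 0 := by norm_num
      rw [h0, F1_zero hGNice, F2_zero hGNice]
      norm_num
    · have hab : 0 < |s - t| + ‖y - x‖^2 := by
        by_contra hcon
        push_neg at hcon
        have h1 : |s - t| = 0 := le_antisymm (by nlinarith [sq_nonneg ‖y - x‖]) (abs_nonneg _)
        have h2 : ‖y - x‖^2 = 0 := le_antisymm (by nlinarith [abs_nonneg (s - t)]) (sq_nonneg _)
        have hst : s = t := by have := abs_eq_zero.mp h1; linarith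
        have hyx : y = x := by
          have h3 : ‖y - x‖ = 0 := by nlinarith [norm_nonneg (y - x)]
          have := norm_eq_zero.mp h3
          exact sub_eq_zero.mp this
        exact hne (by rw [hst, hyx])
      have h1 : w s y ≤ m (|s - t| + ‖y - x‖^2) := hwm _ (s, y) ⟨hs, le_rfl⟩
      have h2 := hmG _ hab
      have h3 := comb hGNice (abs_nonneg (s - t)) (sq_nonneg ‖y - x‖)
      have h4 := F1_ge hGNice (s - t)
      have h5 := F2_ge hGNice (sq_nonneg ‖y - x‖)
      linarith
  -- the test function
  refine ⟨fun s y => u t x + p*(s-t) + ⟪q, y - x⟫_ℝ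
      + (1/2) * ⟪matCLM X (y - x), y - x⟫_ℝ
      + F1 G (s-t) + (s-t)^2 + F2 G (‖y - x‖^2) + (‖y - x‖^2)^2,
    fun s _ => p + k1 G (s-t) + 2*(s-t),
    fun _ y => q + matCLM X (y - x) + (2 * k2 G (‖y - x‖^2) + 4*(‖y - x‖^2)) • (y - x),
    fun _ y => matCLM X + ((2 * k2 G (‖y - x‖^2) + 4*(‖y - x‖^2)) • ContinuousLinearMap.id ℝ _
      + (4 * k2d G (‖y - x‖^2) + 8) • rankOne (y - x)),
    ?_, ?_, ?_, ?_, ?_, ?_, ?_, ?_, ?_, ?_, ?_⟩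
  · -- φt continuous
    have := k1_cont hGNice
    fun_prop
  · -- time derivative
    intro s y
    have h1 : HasDerivAt (fun r : ℝ => r - t) 1 s := (hasDerivAt_id s).sub_const t
    have hp : HasDerivAt (fun r => p * (r - t)) p s := by simpa using h1.const_mul p
    have hF : HasDerivAt (fun r => F1 G (r - t)) (k1 G (s - t)) s := by
      simpa [Function.comp_def] using (hasDerivAt_F1 hGNice (s - t)).comp s h1
    have hsq : HasDerivAt (fun r : ℝ => (r - t)^2) (2*(s-t)) s := by
      have := (hasDerivAt_pow 2 (s - t)).comp s h1
      simpa [Function.comp_def] using this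
    have htot := (((((((hasDerivAt_const s (u t x)).add hp).add_const
      (⟪q, y - x⟫_ℝ)).add_const ((1/2) * ⟪matCLM X (y - x), y - x⟫_ℝ)).add hF).add
      hsq).add_const (F2 G (‖y - x‖^2))).add_const ((‖y - x‖^2)^2)
    beta_reduce
    refine htot.congr_deriv (Eq.symm ?_)
    ring
  · -- gradient continuous
    have h1 : Continuous (fun y : E => y - x) := continuous_id.sub continuous_const
    have hyc : Continuous (fun y : E => q + matCLM X (y - x)
        + (2 * k2 G (‖y - x‖^2) + 4*(‖y - x‖^2)) • (y - x)) :=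
      (continuous_const.add ((matCLM X).continuous.comp h1)).add
        ((coeff_cont hGNice x).smul h1)
    exact hyc.comp continuous_snd
  · -- gradient
    intro s y
    have hlin := lin_hasFDerivAt q x y
    have hquad := quad_hasFDerivAt hX x y
    have hF2 : HasFDerivAt (fun y : E => F2 G (‖y - x‖^2))
        (k2 G (‖y - x‖^2) • ((2:ℝ) • innerSL ℝ (y - x))) y := by
      simpa [Function.comp_def] using
        (hasDerivAt_F2 hGNice (‖y - x‖^2)).comp_hasFDerivAt y (normsq_hasFDerivAt x y)
    have hb2 : HasFDerivAt (fun y : E => (‖y - x‖^2)^2)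
        ((2*(‖y - x‖^2)) • ((2:ℝ) • innerSL ℝ (y - x))) y := by
      have hdsq : HasDerivAt (fun r : ℝ => r^2) (2*(‖y - x‖^2)) (‖y - x‖^2) := by
        simpa using hasDerivAt_pow 2 (‖y - x‖^2)
      simpa [Function.comp_def] using hdsq.comp_hasFDerivAt y (normsq_hasFDerivAt x y)
    have htot := (((((((hasFDerivAt_const (u t x + p*(s-t)) y).add hlin).add
      hquad).add_const (F1 G (s-t))).add_const ((s-t)^2)).add hF2).add hb2)
    beta_reduce
    refine hasGradientAt_of_hasFDerivAt htot ?_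
    intro v
    simp only [ContinuousLinearMap.add_apply, ContinuousLinearMap.zero_apply,
      ContinuousLinearMap.smul_apply, innerSL_apply_apply, smul_eq_mul,
      inner_add_left, real_inner_smul_left]
    ring
  · -- Hessian continuous
    exact (continuous_const.add (hess_cont hGNice x)).comp continuous_snd
  · -- Hessian
    intro s y
    beta_reduce
    have h1 : HasFDerivAt (fun y : E => y - x) (ContinuousLinearMap.id ℝ _) y :=
      (hasFDerivAt_id y).sub_const x
    have h2 : HasFDerivAt (fun y : E => matCLM X (y - x)) (matCLM X) y := by
      have := ((matCLM X).hasFDerivAt (x := y - x)).comp y h1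
      simpa only [Function.comp_def, ContinuousLinearMap.comp_id] using this
    have h3 := ((hasFDerivAt_const q y).add h2).add (Ncomp_hasFDerivAt hGNice x y)
    refine h3.congr_fderiv (Eq.symm ?_)
    refine ContinuousLinearMap.ext fun v => ?_
    simp
  · -- strict max
    intro s hs y hne
    beta_reduce
    have hφtx : u t x + p*(t-t) + ⟪q, x - x⟫_ℝ
        + (1/2) * ⟪matCLM X (x - x), x - x⟫_ℝ
        + F1 G (t-t) + (t-t)^2 + F2 G (‖x - x‖^2) + (‖x - x‖^2)^2 = u t x := by
      rw [sub_self, sub_self]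
      simp [F1_zero hGNice, F2_zero hGNice]
    rw [hφtx, sub_self]
    have hkey := hdom s hs y
    have hexp : u s y - (u t x + p*(s-t) + ⟪q, y - x⟫_ℝ
        + (1/2) * ⟪matCLM X (y - x), y - x⟫_ℝ
        + F1 G (s-t) + (s-t)^2 + F2 G (‖y - x‖^2) + (‖y - x‖^2)^2)
        = w s y - F1 G (s-t) - F2 G (‖y - x‖^2) - ((s-t)^2 + (‖y - x‖^2)^2) := by
      simp only [hwdef]; ring
    rw [hexp]
    have hpos : 0 < (s-t)^2 + (‖y - x‖^2)^2 := by
      have : ¬(s = t ∧ y = x) := by simpa [Prod.ext_iff] using hne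
      rcases eq_or_ne s t with hst | hst
      · have hyx : y ≠ x := fun h => this ⟨hst, h⟩
        have h5 : 0 < ((‖y - x‖^2)^2) := by
          have := normsq_pos hyx
          positivity
        exact add_pos_of_nonneg_of_pos (sq_nonneg _) h5
      · have h3 : s - t ≠ 0 := sub_ne_zero_of_ne hst
        have h4 : 0 < (s-t)^2 := by positivity
        exact add_pos_of_pos_of_nonneg h4 (sq_nonneg _)
    linarith
  · -- value at (t,x)
    beta_reduce
    rw [sub_self, sub_self]
    simp [F1_zero hGNice, F2_zero hGNice]
  · -- time derivative value
    beta_reduce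
    rw [sub_self]
    simp [k1_zero hGNice]
  · -- gradient value
    beta_reduce
    rw [sub_self]
    simp [k2_zero hGNice]
  · -- Hessian value
    intro v i
    beta_reduce
    rw [sub_self]
    have hc0 : 2 * k2 G (‖(0:E)‖^2) + 4*(‖(0:E)‖^2) = 0 := coeff_zero hGNice
    rw [hc0, rankOne_zero]
    simp [matCLM_apply]

end SJet

namespace SJet

open InnerProductSpace

variable {n : ℕ}

local notation "E" => EuclideanSpace ℝ (Fin n)

lemma toDual_eq_innerSL (g : E) : (toDual ℝ (EuclideanSpace ℝ (Fin n))) g = innerSL ℝ g :=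
  ContinuousLinearMap.ext fun v => by rw [toDual_apply_apply, innerSL_apply_apply]

set_option maxHeartbeats 1000000 in
theorem backward {T : ℝ}
    (u : ℝ → E → ℝ) {t : ℝ} {x : E}
    (p : ℝ) (q : E) (X : Matrix (Fin n) (Fin n) ℝ) (hX : X.IsSymm)
    (φ φt : ℝ → E → ℝ) (φx : ℝ → E → E) (φxx : ℝ → E → (E →L[ℝ] E))
    (hφt_cont : Continuous (fun pr : ℝ × E => φt pr.1 pr.2))
    (hφt : ∀ (s : ℝ) (y : E), HasDerivAt (fun r => φ r y) (φt s y) s)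
    (hφx : ∀ (s : ℝ) (y : E), HasGradientAt (φ s) (φx s y) y)
    (hφxx_cont : Continuous (fun pr : ℝ × E => φxx pr.1 pr.2))
    (hφxx : ∀ (s : ℝ) (y : E), HasFDerivAt (φx s) (φxx s y) y)
    (hmax : ∀ s ∈ Set.Icc (0 : ℝ) T, ∀ y : E, (s, y) ≠ (t, x) →
      u s y - φ s y < u t x - φ t x)
    (hval : φ t x = u t x) (hpt : φt t x = p) (hqx : φx t x = q)
    (hXx : ∀ (v : E) (i : Fin n), φxx t x v i = ∑ j, X i j * v j) :
    ∀ ε > (0 : ℝ), ∃ δ > (0 : ℝ), ∀ s ∈ Set.Icc (0 : ℝ) T,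
      ∀ y : E, |s - t| + ‖y - x‖ < δ →
        u s y - u t x - p * (s - t) - (∑ i, q i * (y i - x i))
            - (1 / 2) * matQuadForm X (y - x)
          ≤ ε * (|s - t| + ‖y - x‖ ^ 2) := by
  intro ε hε
  have hXclm : φxx t x = matCLM X := by
    refine ContinuousLinearMap.ext fun v => ?_
    ext i
    rw [hXx v i, matCLM_apply]
  -- tolerance for the time derivative
  obtain ⟨δ₁, hδ₁, h1⟩ := Metric.continuousAt_iff.mp (hφt_cont.continuousAt (x := (t, x))) ε hε
  -- tolerance for the Hessian
  obtain ⟨δ₂, hδ₂, h2⟩ := Metric.continuousAt_iff.mp (hφxx_cont.continuousAt (x := (t, x))) ε hε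
  refine ⟨min δ₁ δ₂, lt_min hδ₁ hδ₂, ?_⟩
  intro s hs y hlt
  have habs : 0 ≤ |s - t| := abs_nonneg _
  have hnn : 0 ≤ ‖y - x‖ := norm_nonneg _
  have hst : |s - t| < min δ₁ δ₂ := by linarith
  have hyx : ‖y - x‖ < min δ₁ δ₂ := by linarith
  -- the time increment estimate
  have hA : |φ s y - φ t y - p * (s - t)| ≤ ε * |s - t| := by
    have hssub : ∀ r ∈ Set.uIcc t s, |r - t| ≤ |s - t| := by
      intro r hr
      rcases le_total t s with h | h
      · rw [Set.uIcc_of_le h] at hr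
        rw [abs_of_nonneg (by linarith [hr.1]), abs_of_nonneg (by linarith : (0:ℝ) ≤ s - t)]
        linarith [hr.2]
      · rw [Set.uIcc_of_ge h] at hr
        rw [abs_of_nonpos (by linarith [hr.2]), abs_of_nonpos (by linarith : s - t ≤ 0)]
        linarith [hr.1]
    have hderiv : ∀ r ∈ Set.uIcc t s,
        HasDerivWithinAt (fun r => φ r y - p * r) (φt r y - p) (Set.uIcc t s) r := by
      intro r _
      exact ((hφt r y).sub ((hasDerivAt_id r).const_mul p |>.congr_deriv (by ring))
        ).hasDerivWithinAt
    have hbound : ∀ r ∈ Set.uIcc t s, ‖φt r y - p‖ ≤ ε := by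
      intro r hr
      have hd : dist (r, y) (t, x) < δ₁ := by
        rw [Prod.dist_eq]
        refine max_lt ?_ ?_
        · rw [Real.dist_eq]
          exact lt_of_le_of_lt (hssub r hr) (lt_of_lt_of_le hst (min_le_left _ _))
        · rw [dist_eq_norm]
          exact lt_of_lt_of_le hyx (min_le_left _ _)
      have := h1 hd
      rw [Real.dist_eq, hpt] at this
      exact this.le
    have := (convex_uIcc t s).norm_image_sub_le_of_norm_hasDerivWithin_le
      hderiv hbound (Set.left_mem_uIcc) (Set.right_mem_uIcc)
    rw [Real.norm_eq_abs, Real.norm_eq_abs] at this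
    calc |φ s y - φ t y - p * (s - t)| = |(φ s y - p * s) - (φ t y - p * t)| := by ring_nf
    _ ≤ ε * |s - t| := this
  -- the space increment estimate
  have hB : |φ t y - φ t x - ⟪q, y - x⟫_ℝ - (1/2) * ⟪matCLM X (y - x), y - x⟫_ℝ|
      ≤ (ε * ‖y - x‖) * ‖y - x‖ := by
    -- first: gradient deviation estimate on the ball
    have hGamma : ∀ z ∈ Metric.ball x δ₂,
        ‖(φx t z - matCLM X (z - x)) - q‖ ≤ ε * ‖z - x‖ := by
      intro z hz
      have hder : ∀ w ∈ Metric.ball x δ₂,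
          HasFDerivWithinAt (fun w => φx t w - matCLM X (w - x))
            (φxx t w - matCLM X) (Metric.ball x δ₂) w := by
        intro w _
        have ha : HasFDerivAt (fun w : E => matCLM X (w - x)) (matCLM X) w := by
          have := ((matCLM X).hasFDerivAt (x := w - x)).comp w
            ((hasFDerivAt_id w).sub_const x)
          exact this.congr_fderiv (ContinuousLinearMap.comp_id _)
        exact ((hφxx t w).sub ha).hasFDerivWithinAt
      have hbound2 : ∀ w ∈ Metric.ball x δ₂, ‖φxx t w - matCLM X‖ ≤ ε := by
        intro w hw
        have hd : dist (t, w) (t, x) < δ₂ := by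
          rw [Prod.dist_eq]
          refine max_lt (by simpa using hδ₂) ?_
          simpa [dist_eq_norm] using hw
        have := h2 hd
        rw [dist_eq_norm, hXclm] at this
        exact this.le
      have := (convex_ball x δ₂).norm_image_sub_le_of_norm_hasFDerivWithin_le
        hder hbound2 (Metric.mem_ball_self hδ₂) hz
      simpa [hqx] using this
    -- second: mean value for the function h on the segment [x,y]
    have hball : y ∈ Metric.ball x δ₂ := by
      simpa [dist_eq_norm] using lt_of_lt_of_le hyx (min_le_right _ _)
    have hseg : ∀ z ∈ segment ℝ x y, ‖z - x‖ ≤ ‖y - x‖ := by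
      rintro z ⟨a, b, ha, hb, hab, rfl⟩
      have hzx : a • x + b • y - x = b • (y - x) := by
        have hax : a = 1 - b := by linarith
        rw [hax]
        module
      rw [hzx, norm_smul, Real.norm_eq_abs, abs_of_nonneg hb]
      nlinarith [norm_nonneg (y - x)]
    have hsegball : segment ℝ x y ⊆ Metric.ball x δ₂ := by
      intro z hz
      rw [Metric.mem_ball, dist_eq_norm]
      exact lt_of_le_of_lt (hseg z hz) (lt_of_lt_of_le hyx (min_le_right _ _))
    have hhder : ∀ z ∈ segment ℝ x y,
        HasFDerivWithinAt (fun z => φ t z - ⟪q, z - x⟫_ℝ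
          - (1/2) * ⟪matCLM X (z - x), z - x⟫_ℝ)
          (innerSL ℝ ((φx t z - matCLM X (z - x)) - q)) (segment ℝ x y) z := by
      intro z _
      have hg : HasFDerivAt (φ t) (innerSL ℝ (φx t z)) z := by
        have := hasGradientAt_iff_hasFDerivAt.mp (hφx t z)
        rwa [toDual_eq_innerSL] at this
      have hcomb := (hg.sub (lin_hasFDerivAt q x z)).sub (quad_hasFDerivAt hX x z)
      refine HasFDerivAt.hasFDerivWithinAt ?_
      refine hcomb.congr_fderiv (Eq.symm ?_)
      refine ContinuousLinearMap.ext fun v => ?_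
      simp only [innerSL_apply_apply, ContinuousLinearMap.sub_apply, inner_sub_left]
      ring
    have hhbound : ∀ z ∈ segment ℝ x y,
        ‖innerSL ℝ ((φx t z - matCLM X (z - x)) - q)‖ ≤ ε * ‖y - x‖ := by
      intro z hz
      rw [innerSL_apply_norm]
      calc ‖φx t z - matCLM X (z - x) - q‖ ≤ ε * ‖z - x‖ := hGamma z (hsegball hz)
      _ ≤ ε * ‖y - x‖ := mul_le_mul_of_nonneg_left (hseg z hz) hε.le
    have hmv := (convex_segment x y).norm_image_sub_le_of_norm_hasFDerivWithin_le
      hhder hhbound (left_mem_segment ℝ x y) (right_mem_segment ℝ x y)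
    have hhx : φ t x - ⟪q, x - x⟫_ℝ - (1/2) * ⟪matCLM X (x - x), x - x⟫_ℝ = φ t x := by
      rw [sub_self]
      simp
    rw [hhx, Real.norm_eq_abs] at hmv
    calc |φ t y - φ t x - ⟪q, y - x⟫_ℝ - (1/2) * ⟪matCLM X (y - x), y - x⟫_ℝ|
        = |φ t y - ⟪q, y - x⟫_ℝ - (1/2) * ⟪matCLM X (y - x), y - x⟫_ℝ - φ t x| := by
          ring_nf
    _ ≤ (ε * ‖y - x‖) * ‖y - x‖ := hmv
  -- conclude
  have hsum_eq : (∑ i, q i * (y i - x i)) = ⟪q, y - x⟫_ℝ := by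
    rw [inner_eq_sum]
    rfl
  have hquad_eq : matQuadForm X (y - x) = ⟪matCLM X (y - x), y - x⟫_ℝ :=
    matQuadForm_eq X (y - x)
  rw [hsum_eq, hquad_eq]
  have huφ : u s y ≤ φ s y := by
    rcases eq_or_ne (s, y) (t, x) with heq | hne
    · obtain ⟨h1', h2'⟩ : s = t ∧ y = x := by simpa [Prod.ext_iff] using heq
      subst h1'; subst h2'
      rw [hval]
    · have := hmax s hs y hne
      rw [hval] at this
      linarith
  have hφtx : u t x = φ t x := hval.symm
  calc u s y - u t x - p * (s - t) - ⟪q, y - x⟫_ℝ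
        - (1/2) * ⟪matCLM X (y - x), y - x⟫_ℝ
      ≤ φ s y - φ t x - p * (s - t) - ⟪q, y - x⟫_ℝ
        - (1/2) * ⟪matCLM X (y - x), y - x⟫_ℝ := by
        rw [hφtx]
        linarith
  _ = (φ s y - φ t y - p * (s - t))
      + (φ t y - φ t x - ⟪q, y - x⟫_ℝ - (1/2) * ⟪matCLM X (y - x), y - x⟫_ℝ) := by ring
  _ ≤ ε * |s - t| + (ε * ‖y - x‖) * ‖y - x‖ :=
      add_le_add (le_trans (le_abs_self _) hA) (le_trans (le_abs_self _) hB)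
  _ = ε * (|s - t| + ‖y - x‖ ^ 2) := by ring

end SJet


/-- For continuous `u` on `[0,T] × ℝⁿ` and `(t,x) ∈ (0,T) × ℝⁿ`,
`(p,q,X) ∈ 𝒫^{2,+}u(t,x)` iff there is a test function `φ`, continuously
differentiable in time and twice continuously differentiable in space, such that
`u − φ` attains a strict global maximum over `[0,T] × ℝⁿ` at `(t,x)` and
`(φ, ∂_t φ, ∇_x φ, ∇²_x φ)(t,x) = (u(t,x), p, q, X)`. -/
theorem superjet_iff_testFunction {n : ℕ} (hn : 1 ≤ n) {T : ℝ} (hT : 0 < T)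
    (u : ℝ → EuclideanSpace ℝ (Fin n) → ℝ)
    (hu : ContinuousOn (fun pr : ℝ × EuclideanSpace ℝ (Fin n) => u pr.1 pr.2)
      (Set.Icc 0 T ×ˢ Set.univ))
    {t : ℝ} {x : EuclideanSpace ℝ (Fin n)} (ht : t ∈ Set.Ioo 0 T)
    (p : ℝ) (q : EuclideanSpace ℝ (Fin n)) (X : Matrix (Fin n) (Fin n) ℝ) :
    InParabolicSuperjet T u t x p q X ↔
      (X.IsSymm ∧
        ∃ (φ : ℝ → EuclideanSpace ℝ (Fin n) → ℝ)
          (φt : ℝ → EuclideanSpace ℝ (Fin n) → ℝ)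
          (φx : ℝ → EuclideanSpace ℝ (Fin n) → EuclideanSpace ℝ (Fin n))
          (φxx : ℝ → EuclideanSpace ℝ (Fin n) →
            (EuclideanSpace ℝ (Fin n) →L[ℝ] EuclideanSpace ℝ (Fin n))),
          -- φ is C¹ in time with continuous time derivative φt
          Continuous (fun pr : ℝ × EuclideanSpace ℝ (Fin n) => φt pr.1 pr.2) ∧
          (∀ (s : ℝ) (y : EuclideanSpace ℝ (Fin n)),
            HasDerivAt (fun r => φ r y) (φt s y) s) ∧
          -- φ is C² in space with continuous gradient φx and continuous Hessian φxx
          Continuous (fun pr : ℝ × EuclideanSpace ℝ (Fin n) => φx pr.1 pr.2) ∧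
          (∀ (s : ℝ) (y : EuclideanSpace ℝ (Fin n)), HasGradientAt (φ s) (φx s y) y) ∧
          Continuous (fun pr : ℝ × EuclideanSpace ℝ (Fin n) => φxx pr.1 pr.2) ∧
          (∀ (s : ℝ) (y : EuclideanSpace ℝ (Fin n)), HasFDerivAt (φx s) (φxx s y) y) ∧
          -- u − φ attains a strict global maximum over [0,T] × ℝⁿ at (t,x)
          (∀ s ∈ Set.Icc (0 : ℝ) T, ∀ y : EuclideanSpace ℝ (Fin n),
            (s, y) ≠ (t, x) → u s y - φ s y < u t x - φ t x) ∧
          -- (φ, ∂_t φ, ∇_x φ, ∇²_x φ)(t,x) = (u(t,x), p, q, X)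
          φ t x = u t x ∧ φt t x = p ∧ φx t x = q ∧
          (∀ (v : EuclideanSpace ℝ (Fin n)) (i : Fin n),
            φxx t x v i = ∑ j, X i j * v j)) := by
  constructor
  · rintro ⟨hXs, hsj⟩
    exact ⟨hXs, SJet.forward u hu p q X hXs hsj⟩
  · rintro ⟨hXs, φ, φt, φx, φxx, hφt_cont, hφt, hφx_cont, hφx, hφxx_cont, hφxx,
      hmax, hval, hpt, hqx, hXx⟩
    exact ⟨hXs, SJet.backward u p q X hXs φ φt φx φxx hφt_cont hφt hφx hφxx_cont hφxx
      hmax hval hpt hqx hXx⟩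
end
end

section
/- Let v : [0,T] × ℝⁿ → ℝ be continuous and suppose: (i) there exist constants C ≥ 0 and m ≥ 0 such that v(t+h, z) − v(t, z) ≤ C(1 + ‖z‖^m) h for all z ∈ ℝⁿ and all 0 < t < t+h < T; (ii) there exists C₀ ≥ 0 such that for every t ∈ [0,T] the function y ↦ v(t,y) − C₀‖y‖² is concave on ℝⁿ. Then for any (t,x) ∈ (0,T) × ℝⁿ, any (p,q,X) ∈ 𝒫^{2,+}v(t,x), any y ∈ ℝⁿ and any h > 0 with t + h < T, one has v(t+h, y) − v(t, x) ≤ C(1 + ‖y‖^m) h + ⟨q, y−x⟩ + C₀‖y−x‖². (This is the pointwise inequality underlying the first display in the proof of the paper's Lemma 4.4.) -/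
noncomputable section

open scoped BigOperators

set_option maxHeartbeats 1000000 in
/-- Let `v : [0,T] × ℝⁿ → ℝ` be continuous and suppose
(i) `v(t+h,z) − v(t,z) ≤ C (1 + ‖z‖^m) h` for all `z` and `0 < t < t+h < T`;
(ii) `y ↦ v(t,y) − C₀‖y‖²` is concave for every `t ∈ [0,T]`.
Then for `(t,x) ∈ (0,T) × ℝⁿ`, `(p,q,X) ∈ 𝒫^{2,+}v(t,x)`, any `y` and any
`h > 0` with `t + h < T`:
`v(t+h,y) − v(t,x) ≤ C (1 + ‖y‖^m) h + ⟨q, y−x⟩ + C₀‖y−x‖²`. -/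
theorem growth_semiconcave_superjet_estimate {n : ℕ} {T : ℝ}
    (v : ℝ → EuclideanSpace ℝ (Fin n) → ℝ)
    (hv : ContinuousOn (fun pr : ℝ × EuclideanSpace ℝ (Fin n) => v pr.1 pr.2)
      (Set.Icc 0 T ×ˢ Set.univ))
    {C : ℝ} (hC : 0 ≤ C) (m : ℕ)
    (hgrow : ∀ z : EuclideanSpace ℝ (Fin n), ∀ t h : ℝ,
      0 < t → 0 < h → t + h < T →
      v (t + h) z - v t z ≤ C * (1 + ‖z‖ ^ m) * h)
    {C₀ : ℝ} (hC₀ : 0 ≤ C₀)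
    (hconc : ∀ t ∈ Set.Icc (0 : ℝ) T,
      ConcaveOn ℝ Set.univ (fun y : EuclideanSpace ℝ (Fin n) => v t y - C₀ * ‖y‖ ^ 2))
    {t : ℝ} {x : EuclideanSpace ℝ (Fin n)} (ht : t ∈ Set.Ioo 0 T)
    (p : ℝ) (q : EuclideanSpace ℝ (Fin n)) (X : Matrix (Fin n) (Fin n) ℝ)
    (hpqX : InParabolicSuperjet T v t x p q X)
    (y : EuclideanSpace ℝ (Fin n)) {h : ℝ} (hh : 0 < h) (hth : t + h < T) :
    v (t + h) y - v t x
      ≤ C * (1 + ‖y‖ ^ m) * h + (∑ i, q i * (y i - x i)) + C₀ * ‖y - x‖ ^ 2 := by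
  obtain ⟨hsym, hjet⟩ := hpqX
  obtain ⟨δ, hδ, hδ'⟩ := hjet 1 one_pos
  set u : EuclideanSpace ℝ (Fin n) := y - x with hu
  set Sq : ℝ := ∑ i, q i * (y i - x i) with hSq
  set Q : ℝ := matQuadForm X u with hQ
  set w : EuclideanSpace ℝ (Fin n) → ℝ := fun z => v t z - C₀ * ‖z‖ ^ 2 with hw
  have hcw := hconc t ⟨ht.1.le, ht.2.le⟩
  -- key step: v t y - v t x ≤ Sq + C₀ ‖u‖²
  have key : v t y - v t x ≤ Sq + C₀ * ‖u‖ ^ 2 := by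
    have hysq : ‖y‖ ^ 2 = ‖x‖ ^ 2 + 2 * inner ℝ x u + ‖u‖ ^ 2 := by
      have : y = x + u := by simp [hu]
      rw [this, @norm_add_sq_real]
    have main : w y - w x ≤ Sq - 2 * C₀ * inner ℝ x u := by
      set A : ℝ := Sq - 2 * C₀ * inner ℝ x u with hA
      set B : ℝ := (1 / 2) * Q + ‖u‖ ^ 2 - C₀ * ‖u‖ ^ 2 with hB
      have : ∀ ε' > (0 : ℝ), w y - w x ≤ A + ε' := by
        intro ε' hε'
        set s : ℝ := min (min 1 (δ / (2 * (‖u‖ + 1)))) (ε' / (|B| + 1)) with hs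
        have hnorm1 : (0 : ℝ) < ‖u‖ + 1 := by positivity
        have hBpos : (0 : ℝ) < |B| + 1 := by positivity
        have hs0 : 0 < s := by
          apply lt_min (lt_min one_pos (by positivity)) (by positivity)
        have hs1 : s ≤ 1 := le_trans (min_le_left _ _) (min_le_left _ _)
        have hsδ : s * ‖u‖ < δ := by
          have h1 : s ≤ δ / (2 * (‖u‖ + 1)) :=
            le_trans (min_le_left _ _) (min_le_right _ _)
          have : s * ‖u‖ ≤ δ / (2 * (‖u‖ + 1)) * (‖u‖ + 1) := by
            apply mul_le_mul h1 (by linarith) (norm_nonneg _) (by positivity)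
          calc s * ‖u‖ ≤ δ / (2 * (‖u‖ + 1)) * (‖u‖ + 1) := this
            _ = δ / 2 := by field_simp
            _ < δ := by linarith
        have hsB : s * |B| ≤ ε' := by
          have h1 : s ≤ ε' / (|B| + 1) := min_le_right _ _
          have : s * |B| ≤ ε' / (|B| + 1) * (|B| + 1) := by
            apply mul_le_mul h1 (by linarith [abs_nonneg B]) (abs_nonneg _) (by positivity)
          calc s * |B| ≤ ε' / (|B| + 1) * (|B| + 1) := this
            _ = ε' := by field_simp
        set z : EuclideanSpace ℝ (Fin n) := x + s • u with hz
        have hzx : z - x = s • u := by simp [hz]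
        -- concavity
        have hcc : (1 - s) * w x + s * w y ≤ w z := by
          have := hcw.2 (Set.mem_univ x) (Set.mem_univ y)
            (by linarith : (0:ℝ) ≤ 1 - s) hs0.le (by ring)
          have hzz : (1 - s) • x + s • y = z := by
            simp only [hz, hu]; module
          simpa [hzz, smul_eq_mul] using this
        -- superjet at (t, z)
        have hnormz : ‖z - x‖ = s * ‖u‖ := by
          rw [hzx, norm_smul, Real.norm_eq_abs, abs_of_pos hs0]
        have hjz := hδ' t ⟨ht.1.le, ht.2.le⟩ z (by
          rw [hnormz]; simpa using hsδ)
        rw [sub_self, abs_zero, zero_add, mul_zero, sub_zero] at hjz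
        -- rewrite the sum and qform for z
        have hsum : (∑ i, q i * (z i - x i)) = s * Sq := by
          rw [hSq, Finset.mul_sum]
          refine Finset.sum_congr rfl fun i _ => ?_
          have : z i - x i = s * (y i - x i) := by
            simp only [hz, hu, PiLp.add_apply, PiLp.smul_apply, PiLp.sub_apply,
              smul_eq_mul]
            ring
          rw [this]; ring
        have hqf : matQuadForm X (z - x) = s ^ 2 * Q := by
          rw [hzx, hQ, matQuadForm, matQuadForm, Finset.mul_sum]
          refine Finset.sum_congr rfl fun i _ => ?_
          have hin : (∑ j, X i j * (s • u) j) = s * ∑ j, X i j * u j := by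
            rw [Finset.mul_sum]
            refine Finset.sum_congr rfl fun j _ => ?_
            simp only [PiLp.smul_apply, smul_eq_mul]; ring
          rw [hin]
          simp only [PiLp.smul_apply, smul_eq_mul]
          ring
        rw [hsum, hqf, hnormz] at hjz
        -- hjz : v t z - v t x - s*Sq - (1/2)*(s^2*Q) ≤ 1 * (0 + (s*‖u‖)^2)
        have hvz : v t z - v t x ≤ s * Sq + (1 / 2) * (s ^ 2 * Q) + s ^ 2 * ‖u‖ ^ 2 := by
          linarith [hjz]
        have hzsq : ‖z‖ ^ 2 = ‖x‖ ^ 2 + 2 * (s * inner ℝ x u) + s ^ 2 * ‖u‖ ^ 2 := by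
          rw [hz, @norm_add_sq_real]
          rw [real_inner_smul_right, norm_smul, Real.norm_eq_abs, abs_of_pos hs0,
            mul_pow]
        have hwz : w z - w x ≤ s * A + s ^ 2 * B := by
          simp only [hw]
          rw [hzsq, hA, hB]
          linarith [hvz]
        have : s * (w y - w x) ≤ s * A + s ^ 2 * B := by linarith [hcc, hwz]
        have h2 : w y - w x ≤ A + s * B := by
          have := (mul_le_mul_iff_right₀ hs0).mp (by linarith : s * (w y - w x) ≤ s * (A + s * B))
          exact this
        have : s * B ≤ ε' := le_trans (le_trans (le_abs_self _) (by
          rw [abs_mul, abs_of_pos hs0])) hsB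
        linarith
      exact le_of_forall_pos_le_add this
    have : w y - w x = v t y - v t x - C₀ * (‖y‖ ^ 2 - ‖x‖ ^ 2) := by
      simp only [hw]; ring
    rw [this, hysq] at main
    linarith [main]
  have hg := hgrow y t h ht.1 hh hth
  have : v (t + h) y - v t x = (v (t + h) y - v t y) + (v t y - v t x) := by ring
  rw [this]
  linarith
end
end
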